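/- Let k ≥ 1 and let n₁, …, n_k be nonzero integers. Set w = B^{n_k} J B^{n_{k−1}} J ⋯ B^{n₁} J (the alternating product of powers of B and copies of J). Then the third column of w is strictly decreasing in absolute value, i.e. |w₁₃| > |w₂₃| > |w₃₃|; in particular the entry w₂₃ of w in row 2 and column 3 is nonzero. -/

import Mathlib

open Matrix

def Bmat : Matrix (Fin 3) (Fin 3) ℤ := !![3, 4, 0; 2, 3, 0; 0, 0, 1]
def Jmat : Matrix (Fin 3) (Fin 3) ℤ := !![0, 0, 1; 0, 1, 0; 1, 0, 0]

def BGL : GL (Fin 3) ℤ :=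
  ⟨Bmat, !![3, -4, 0; -2, 3, 0; 0, 0, 1], by decide, by decide⟩

def JGL : GL (Fin 3) ℤ := ⟨Jmat, Jmat, by decide, by decide⟩

def H : Subgroup (GL (Fin 3) ℤ) := Subgroup.closure {BGL, JGL}

/-! ### Arithmetic lemmas -/

lemma key1 (t p y z : ℤ) (ht : 1 ≤ t) (hp : p ≠ 0) (hP : t^2 = 8*p^2+1) (h : |z| < |y|) :
    |t*y+2*p*z| < |4*p*y+t*z| := by
  rw [← sq_lt_sq]
  have hP1 : 1 ≤ |p| := Int.one_le_abs (by omega)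
  have ht3 : t ≤ 3 * |p| := by nlinarith [sq_abs p]
  have h1 : -(|p| * (|y| * |z|)) ≤ p*(y*z) := by
    have := neg_abs_le (p*(y*z))
    rwa [abs_mul, abs_mul] at this
  have hz0 : 0 ≤ |z| := abs_nonneg z
  have hy0 : 0 ≤ |y| := abs_nonneg y
  have hPYZ : 0 ≤ |p| * (|y| * |z|) := by positivity
  have hA : -(12 * (|p| ^ 2 * (|y| * |z|))) ≤ 4*t*(p*(y*z)) := by
    have h2 : 4*t*(-(|p| * (|y| * |z|))) ≤ 4*t*(p*(y*z)) :=
      mul_le_mul_of_nonneg_left h1 (by linarith)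
    nlinarith [mul_le_mul_of_nonneg_right ht3 hPYZ]
  have hB : 0 < (4 * |p| ^ 2 + 1) * |z| ^ 2 + (8 * |p| ^ 2 - 1) * |y| ^ 2 - 12 * (|p| ^ 2 * (|y| * |z|)) := by
    nlinarith [mul_nonneg (mul_nonneg (by nlinarith : (0:ℤ) ≤ |p| ^ 2 - 1) (by linarith : (0:ℤ) ≤ |y| - |z|)) (by linarith : (0:ℤ) ≤ 2 * |y| - |z|),
      mul_pos (by linarith : (0:ℤ) < |y| - |z|) (by linarith : (0:ℤ) < 7 * |y| - 5 * |z|)]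
  nlinarith [hA, hB, sq_abs p, sq_abs y, sq_abs z]

lemma aux2 (t p x y z : ℤ) (ht : 1 ≤ t) (hp : 1 ≤ p) (hP : t^2 = 8*p^2+1)
    (hy : 1 ≤ y) (hzy : |z| < y) (hx : |x| + |z| < 2*y) :
    |4*p*y+t*z| + |x| < 2*(t*y+2*p*z) := by
  have ht2 : 2*p+1 ≤ t := by nlinarith
  have hz1 : -y < z := neg_lt_of_abs_lt hzy
  have hz2 : z < y := lt_of_abs_lt hzy
  rcases le_or_gt 0 z with hz | hz
  · rw [abs_of_nonneg (by positivity : (0:ℤ) ≤ 4*p*y+t*z)]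
    rw [abs_of_nonneg hz] at hx
    nlinarith [mul_le_mul_of_nonneg_right ht2 (by linarith : (0:ℤ) ≤ 2*y-z)]
  · rw [abs_of_neg hz] at hx
    rcases le_or_gt 0 (4*p*y+t*z) with hu | hu
    · rw [abs_of_nonneg hu]
      have hinner : 0 ≤ p*(2*y^2-z^2)+y*z := by
        nlinarith [mul_nonneg (by linarith : (0:ℤ) ≤ p-1) (by nlinarith : (0:ℤ) ≤ 2*y^2-z^2),
          mul_nonneg (by linarith : (0:ℤ) ≤ y) (by linarith : (0:ℤ) ≤ y+z),
          mul_nonneg (by linarith : (0:ℤ) ≤ y-z) (by linarith : (0:ℤ) ≤ y+z)]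
      have key : (4*p*(y-z)+(2*y+z))^2 ≤ t^2*(2*y-z)^2 := by
        nlinarith [mul_nonneg (by linarith : (0:ℤ) ≤ p-1) hinner]
      have key2 : 4*p*(y-z)+(2*y+z) ≤ t*(2*y-z) := by
        nlinarith [key, mul_pos (by linarith : (0:ℤ) < t) (by linarith : (0:ℤ) < 2*y-z),
          mul_pos (by nlinarith : (0:ℤ) < 4*p*(y-z)) (by linarith : (0:ℤ) < 2*y+z)]
      linarith
    · rw [abs_of_neg hu]
      nlinarith [mul_le_mul_of_nonneg_right (by linarith : (1:ℤ) ≤ t) (by linarith : (0:ℤ) ≤ 2*y+z),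
        mul_nonneg (by linarith : (0:ℤ) ≤ 4*p) (by linarith : (0:ℤ) ≤ y+z)]

lemma part2 (t p x y z : ℤ) (ht : 1 ≤ t) (hp : p ≠ 0) (hP : t^2 = 8*p^2+1)
    (h1 : |y| < |x|) (h2 : |x| + |z| < 2 * |y|) :
    |4*p*y+t*z| + |x| < 2 * |t*y+2*p*z| := by
  have hzy : |z| < |y| := by linarith
  have hy0 : y ≠ 0 := by
    intro h; rw [h, abs_zero] at h1 h2; linarith [abs_nonneg z]
  rcases hp.lt_or_gt with hpn | hpp <;> rcases hy0.lt_or_gt with hyn | hyp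
  · -- p < 0, y < 0 : use (-p, -y, z)
    have h := aux2 t (-p) x (-y) z ht (by omega) (by ring_nf; linarith)
      (by omega) (by rwa [abs_of_neg hyn] at hzy) (by rw [abs_of_neg hyn] at h2; linarith)
    have e1 : 4*(-p)*(-y)+t*z = 4*p*y+t*z := by ring
    have e2 : t*(-y)+2*(-p)*z = -(t*y+2*p*z) := by ring
    rw [e1, e2] at h
    linarith [neg_le_abs (t*y+2*p*z)]
  · -- p < 0, y > 0 : use (-p, y, -z)
    have h := aux2 t (-p) x y (-z) ht (by omega) (by ring_nf; linarith)
      (by omega) (by rw [abs_neg]; rwa [abs_of_pos hyp] at hzy)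
      (by rw [abs_neg]; rw [abs_of_pos hyp] at h2; linarith)
    have e1 : 4*(-p)*y+t*(-z) = -(4*p*y+t*z) := by ring
    have e2 : t*y+2*(-p)*(-z) = t*y+2*p*z := by ring
    rw [e1, e2, abs_neg] at h
    linarith [le_abs_self (t*y+2*p*z)]
  · -- p > 0, y < 0 : use (p, -y, -z)
    have h := aux2 t p x (-y) (-z) ht (by omega) hP
      (by omega) (by rw [abs_neg]; rwa [abs_of_neg hyn] at hzy)
      (by rw [abs_neg]; rw [abs_of_neg hyn] at h2; linarith)
    have e1 : 4*p*(-y)+t*(-z) = -(4*p*y+t*z) := by ring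
    have e2 : t*(-y)+2*p*(-z) = -(t*y+2*p*z) := by ring
    rw [e1, e2, abs_neg] at h
    linarith [neg_le_abs (t*y+2*p*z)]
  · have h := aux2 t p x y z ht (by omega) hP (by omega)
      (by rwa [abs_of_pos hyp] at hzy) (by rw [abs_of_pos hyp] at h2; linarith)
    linarith [le_abs_self (t*y+2*p*z)]

/-! ### Powers of B -/

lemma BGL_val : (BGL : Matrix (Fin 3) (Fin 3) ℤ) = !![3, 4, 0; 2, 3, 0; 0, 0, 1] := rfl
lemma BGL_inv_val : ((BGL⁻¹ : GL (Fin 3) ℤ) : Matrix (Fin 3) (Fin 3) ℤ) = !![3, -4, 0; -2, 3, 0; 0, 0, 1] := rfl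

lemma Bpow (m : ℤ) : ∃ t p : ℤ, 1 ≤ t ∧ t^2 = 8*p^2+1 ∧
    (0 ≤ m → 0 ≤ p) ∧ (m ≤ 0 → p ≤ 0) ∧ (m ≠ 0 → p ≠ 0) ∧
    ((BGL ^ m : GL (Fin 3) ℤ) : Matrix (Fin 3) (Fin 3) ℤ) = !![t, 4*p, 0; 2*p, t, 0; 0, 0, 1] := by
  induction m using Int.induction_on with
  | zero =>
    refine ⟨1, 0, le_refl _, by ring, fun _ => le_refl _, fun _ => le_refl _, fun h => absurd rfl h, ?_⟩
    simp only [zpow_zero, Units.val_one]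
    decide
  | succ i ih =>
    obtain ⟨t, p, ht, hP, hpos, hneg, hne, hM⟩ := ih
    have hp0 : 0 ≤ p := hpos (Int.ofNat_nonneg i)
    refine ⟨3*t+8*p, t+3*p, by linarith, by ring_nf; nlinarith, fun _ => by linarith,
      fun h => by omega, fun _ => by positivity, ?_⟩
    rw [_root_.zpow_add_one, Units.val_mul, hM, BGL_val]
    ext i j
    fin_cases i <;> fin_cases j <;>
      simp [Matrix.mul_apply, Fin.sum_univ_three] <;> ring
  | pred i ih =>
    obtain ⟨t, p, ht, hP, hpos, hneg, hne, hM⟩ := ih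
    have hp0 : p ≤ 0 := hneg (by omega)
    refine ⟨3*t-8*p, 3*p-t, by linarith, by ring_nf; nlinarith, fun h => by omega,
      fun _ => by linarith, fun _ => by omega, ?_⟩
    rw [_root_.zpow_sub_one, Units.val_mul, hM, BGL_inv_val]
    ext i j
    fin_cases i <;> fin_cases j <;>
      simp [Matrix.mul_apply, Fin.sum_univ_three] <;> ring

lemma headmat (m : ℤ) (t p : ℤ)
    (hM : ((BGL ^ m : GL (Fin 3) ℤ) : Matrix (Fin 3) (Fin 3) ℤ) = !![t, 4*p, 0; 2*p, t, 0; 0, 0, 1]) :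
    ((BGL ^ m * JGL : GL (Fin 3) ℤ) : Matrix (Fin 3) (Fin 3) ℤ) = !![0, 4*p, t; 0, t, 2*p; 1, 0, 0] := by
  rw [Units.val_mul, hM]
  show _ * Jmat = _
  ext i j
  fin_cases i <;> fin_cases j <;>
    simp [Matrix.mul_apply, Fin.sum_univ_three, Jmat, Matrix.vecHead, Matrix.vecTail]

lemma abs2p (p : ℤ) : |2*p| = 2*|p| := by rw [abs_mul]; norm_num

/-! ### Main induction -/

lemma main_aux (k : ℕ) : ∀ (n : Fin (k+1) → ℤ), (∀ i, n i ≠ 0) →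
    ∀ M : Matrix (Fin 3) (Fin 3) ℤ,
    M = (((List.ofFn fun i => BGL ^ (n i) * JGL).prod : GL (Fin 3) ℤ) : Matrix (Fin 3) (Fin 3) ℤ) →
    |M 1 2| < |M 0 2| ∧ |M 0 2| + |M 2 2| < 2 * |M 1 2| := by
  induction k with
  | zero =>
    intro n hn M hM
    obtain ⟨t, p, ht, hP, _, _, hne, hB⟩ := Bpow (n 0)
    have hp : p ≠ 0 := hne (hn 0)
    have hhead := headmat (n 0) t p hB
    rw [List.ofFn_succ, List.ofFn_zero, List.prod_cons, List.prod_nil, mul_one, hhead] at hM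
    have h0 : M 0 2 = t := by rw [hM]; simp
    have h1 : M 1 2 = 2*p := by rw [hM]; simp
    have h2 : M 2 2 = 0 := by rw [hM]; simp
    rw [h0, h1, h2, abs2p]
    have hP1 : 1 ≤ |p| := Int.one_le_abs hp
    have habs : |t| = t := abs_of_pos (by linarith)
    constructor
    · rw [habs]; nlinarith [sq_abs p]
    · rw [habs, abs_zero]; nlinarith [sq_abs p]
  | succ k ih =>
    intro n hn M hM
    obtain ⟨t, p, ht, hP, _, _, hne, hB⟩ := Bpow (n 0)
    have hp : p ≠ 0 := hne (hn 0)
    have hhead := headmat (n 0) t p hB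
    rw [List.ofFn_succ, List.prod_cons, Units.val_mul, hhead] at hM
    set M' : Matrix (Fin 3) (Fin 3) ℤ :=
      (((List.ofFn fun i : Fin (k+1) => BGL ^ (n i.succ) * JGL).prod : GL (Fin 3) ℤ) : Matrix (Fin 3) (Fin 3) ℤ) with hM'
    obtain ⟨ih1, ih2⟩ := ih (fun i => n i.succ) (fun i => hn i.succ) M' rfl
    set x := M' 0 2
    set y := M' 1 2
    set z := M' 2 2
    have h0 : M 0 2 = 4*p*y + t*z := by rw [hM]; simp [Matrix.mul_apply, Fin.sum_univ_three]; rfl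
    have h1 : M 1 2 = t*y + 2*p*z := by rw [hM]; simp [Matrix.mul_apply, Fin.sum_univ_three]; rfl
    have h2 : M 2 2 = x := by rw [hM]; simp [Matrix.mul_apply, Fin.sum_univ_three]; rfl
    rw [h0, h1, h2]
    have hzy : |z| < |y| := by linarith
    exact ⟨key1 t p y z ht hp hP hzy, part2 t p x y z ht hp hP ih1 ih2⟩

/-- For nonzero integers `n₁, …, n_k` (`k ≥ 1`), the third column of the word
`w = B^{n_k} J ⋯ B^{n₁} J` is strictly decreasing in absolute value; in
particular `w₂₃ ≠ 0`. -/
theorem word_third_column (k : ℕ) (hk : 1 ≤ k) (n : Fin k → ℤ)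
    (hn : ∀ i, n i ≠ 0)
    (w : GL (Fin 3) ℤ) (hw : w = (List.ofFn fun i => BGL ^ (n i) * JGL).prod) :
    |(w : Matrix (Fin 3) (Fin 3) ℤ) 0 2| > |(w : Matrix (Fin 3) (Fin 3) ℤ) 1 2| ∧
    |(w : Matrix (Fin 3) (Fin 3) ℤ) 1 2| > |(w : Matrix (Fin 3) (Fin 3) ℤ) 2 2| ∧
    (w : Matrix (Fin 3) (Fin 3) ℤ) 1 2 ≠ 0 := by
  obtain ⟨k', rfl⟩ : ∃ k', k = k' + 1 := ⟨k - 1, by omega⟩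
  obtain ⟨h1, h2⟩ := main_aux k' n hn (w : Matrix (Fin 3) (Fin 3) ℤ) (by rw [hw])
  refine ⟨h1, by linarith, ?_⟩
  have h3 : 0 ≤ |(w : Matrix (Fin 3) (Fin 3) ℤ) 2 2| := abs_nonneg _
  have h4 : 0 < |(w : Matrix (Fin 3) (Fin 3) ℤ) 1 2| := by linarith
  exact abs_pos.mp h4
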